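/- arXiv:1009.1512 — 6 statements merged into one kernel-verified Lean document; each statement's English description precedes it below -/
import Mathlib

section
/- Let Γ = (V, E) be a finite simple graph and let S ⊆ V be an independent set (no two vertices of S are joined by an edge). Then |S| ≤ ϑ(Γ), where ϑ(Γ) is the Lovász theta number of Γ. Consequently the independence number α(Γ) satisfies α(Γ) ≤ ϑ(Γ). -/
open Finset Matrix

/-- The feasible values of the Lovász theta SDP of a finite graph `G`:
values `∑_{i,j} B i j` over real symmetric positive semidefinite matrices `B`
with `∑ i, B i i = 1` and `B i j = 0` on edges. -/
def lovaszThetaSet {V : Type*} [Fintype V] (G : SimpleGraph V) : Set ℝ :=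
  {s | ∃ B : Matrix V V ℝ, B.PosSemidef ∧ (∑ i, B i i) = 1 ∧
    (∀ i j, G.Adj i j → B i j = 0) ∧ s = ∑ i, ∑ j, B i j}

/-- The Lovász theta number of a finite graph. -/
noncomputable def lovaszTheta {V : Type*} [Fintype V] (G : SimpleGraph V) : ℝ :=
  sSup (lovaszThetaSet G)

/-- The independence number of a finite graph: the maximal cardinality of a set of
vertices no two of which are adjacent. -/
noncomputable def indepNum {V : Type*} [Fintype V] (G : SimpleGraph V) : ℕ :=
  sSup {m | ∃ S : Finset V, (∀ i ∈ S, ∀ j ∈ S, ¬ G.Adj i j) ∧ S.card = m}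

private lemma psd_entry_bound {V : Type*} [Fintype V] [DecidableEq V] {B : Matrix V V ℝ}
    (hB : B.PosSemidef) (i j : V) : 2 * B i j ≤ B i i + B j j := by
  have h := hB.dotProduct_mulVec_nonneg (Pi.single i 1 - Pi.single j 1)
  have hs : B j i = B i j := by simpa using (hB.1.apply j i).symm
  simp only [Matrix.mulVec, dotProduct, Pi.sub_apply, Pi.single_apply, sub_mul, mul_sub,
    Finset.sum_sub_distrib, mul_ite, ite_mul, one_mul, mul_one, zero_mul, mul_zero, star_trivial,
    Finset.sum_ite_eq, Finset.sum_ite_eq', Finset.mem_univ, if_true] at h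
  nlinarith [h]

private lemma lovaszThetaSet_bddAbove {V : Type*} [Fintype V] (G : SimpleGraph V) :
    BddAbove (lovaszThetaSet G) := by
  classical
  refine ⟨(Fintype.card V : ℝ), ?_⟩
  rintro s ⟨B, hB, htr, -, rfl⟩
  calc ∑ i, ∑ j, B i j ≤ ∑ i, ∑ j, (B i i + B j j) / 2 := by
        refine Finset.sum_le_sum fun i _ => Finset.sum_le_sum fun j _ => ?_
        linarith [psd_entry_bound hB i j]
    _ = (Fintype.card V : ℝ) := by
        have hinner : ∀ i : V, ∑ j : V, (B i i + B j j) / 2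
            = ((Fintype.card V : ℝ) * B i i + 1) / 2 := by
          intro i
          rw [← Finset.sum_div, Finset.sum_add_distrib, Finset.sum_const, Finset.card_univ,
            nsmul_eq_mul, htr]
        simp only [hinner]
        rw [← Finset.sum_div, Finset.sum_add_distrib, Finset.sum_const, Finset.card_univ,
          nsmul_eq_mul, mul_one, ← Finset.mul_sum, htr]
        ring

private lemma card_mem_lovaszThetaSet {V : Type*} [Fintype V] (G : SimpleGraph V) (S : Finset V)
    (hS : ∀ i ∈ S, ∀ j ∈ S, ¬ G.Adj i j) (hne : S.Nonempty) :
    ((S.card : ℝ)) ∈ lovaszThetaSet G := by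
  classical
  have hcard : (0:ℝ) < S.card := by exact_mod_cast Finset.card_pos.mpr hne
  have htr : ∑ i, (if i ∈ S ∧ i ∈ S then (S.card : ℝ)⁻¹ else 0) = 1 := by
    simp only [and_self]
    rw [Finset.sum_ite_mem, Finset.univ_inter, Finset.sum_const, nsmul_eq_mul]
    field_simp
  refine ⟨fun i j => if i ∈ S ∧ j ∈ S then (S.card : ℝ)⁻¹ else 0, ?_, htr, ?_, ?_⟩
  · refine Matrix.PosSemidef.of_dotProduct_mulVec_nonneg ?_ ?_
    · ext i j
      change star (if j ∈ S ∧ i ∈ S then (S.card : ℝ)⁻¹ else 0) = (if i ∈ S ∧ j ∈ S then (S.card : ℝ)⁻¹ else 0)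
      simp [Matrix.conjTranspose_apply, and_comm]
    · intro x
      rw [star_trivial]
      have key : ∀ i, (Matrix.mulVec (fun i j => if i ∈ S ∧ j ∈ S then (S.card : ℝ)⁻¹ else 0) x) i
          = if i ∈ S then (S.card : ℝ)⁻¹ * ∑ j ∈ S, x j else 0 := by
        intro i
        by_cases hi : i ∈ S <;>
          simp [Matrix.mulVec, dotProduct, hi, ite_mul, Finset.mul_sum,
            Finset.sum_ite_mem, Finset.univ_inter, Finset.sum_filter]
      have heq : x ⬝ᵥ (Matrix.mulVec (fun i j => if i ∈ S ∧ j ∈ S then (S.card : ℝ)⁻¹ else 0) x)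
          = (S.card : ℝ)⁻¹ * (∑ j ∈ S, x j)^2 := by
        simp only [dotProduct, key, star_trivial, mul_ite, mul_zero]
        rw [Finset.sum_ite_mem, Finset.univ_inter, ← Finset.sum_mul]
        ring
      rw [heq]
      positivity
  · intro i j hadj
    by_cases hi : i ∈ S <;> by_cases hj : j ∈ S <;> simp [hi, hj]
    exact absurd hadj (hS i hi j hj)
  · have h1 : ∀ i, (∑ j, if i ∈ S ∧ j ∈ S then (S.card : ℝ)⁻¹ else 0)
        = if i ∈ S then 1 else 0 := by
      intro i
      by_cases hi : i ∈ S <;> simp only [hi, true_and, false_and, if_true, if_false,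
        Finset.sum_const_zero]
      rw [Finset.sum_ite_mem, Finset.univ_inter, Finset.sum_const, nsmul_eq_mul]
      field_simp
    simp only [h1]
    rw [Finset.sum_ite_mem, Finset.univ_inter, Finset.sum_const, nsmul_eq_mul, mul_one]

private lemma card_le_theta {V : Type*} [Fintype V] (Γ : SimpleGraph V)
    (S : Finset V) (hS : ∀ i ∈ S, ∀ j ∈ S, ¬ Γ.Adj i j) :
    (S.card : ℝ) ≤ lovaszTheta Γ := by
  classical
  rcases S.eq_empty_or_nonempty with rfl | hne
  · simp only [Finset.card_empty, Nat.cast_zero]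
    rcases isEmpty_or_nonempty V with hV | hV
    · have : lovaszThetaSet Γ = ∅ := by
        ext s
        simp only [lovaszThetaSet, Set.mem_setOf_eq, Set.mem_empty_iff_false, iff_false]
        rintro ⟨B, -, htr, -, -⟩
        simp at htr
      rw [lovaszTheta, this, Real.sSup_empty]
    · obtain ⟨v⟩ := hV
      have hmem := card_mem_lovaszThetaSet Γ {v}
        (by simp (config := {contextual := true}) [SimpleGraph.irrefl])
        (Finset.singleton_nonempty v)
      have := le_csSup (lovaszThetaSet_bddAbove Γ) hmem
      simp only [Finset.card_singleton, Nat.cast_one] at this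
      unfold lovaszTheta
      linarith
  · exact le_csSup (lovaszThetaSet_bddAbove Γ) (card_mem_lovaszThetaSet Γ S hS hne)

/-- Any independent set `S` of a finite graph `Γ` satisfies `|S| ≤ ϑ(Γ)`;
consequently `α(Γ) ≤ ϑ(Γ)`. -/
theorem card_indep_le_lovaszTheta {V : Type*} [Fintype V] (Γ : SimpleGraph V)
    (S : Finset V) (hS : ∀ i ∈ S, ∀ j ∈ S, ¬ Γ.Adj i j) :
    (S.card : ℝ) ≤ lovaszTheta Γ ∧ (indepNum Γ : ℝ) ≤ lovaszTheta Γ := by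
  refine ⟨card_le_theta Γ S hS, ?_⟩
  have hbdd : BddAbove {m | ∃ S : Finset V, (∀ i ∈ S, ∀ j ∈ S, ¬ Γ.Adj i j) ∧ S.card = m} := by
    refine ⟨Fintype.card V, ?_⟩
    rintro m ⟨T, -, rfl⟩
    exact Finset.card_le_univ T
  have hne : {m | ∃ S : Finset V, (∀ i ∈ S, ∀ j ∈ S, ¬ Γ.Adj i j) ∧ S.card = m}.Nonempty :=
    ⟨0, ∅, by simp, rfl⟩
  obtain ⟨T, hT, hTc⟩ := Nat.sSup_mem hne hbdd
  rw [indepNum, ← hTc]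
  exact card_le_theta Γ T hT
end

section
/- Let Γ = (V, E) be a finite simple graph and let χ(Γ̄) denote the chromatic number of the complementary graph Γ̄. Then ϑ(Γ) ≤ χ(Γ̄), where ϑ(Γ) is the Lovász theta number of Γ. -/
open Finset

private lemma sum_swap4 {α β : Type*} [Fintype α] [Fintype β] (f : α → α → β → β → ℝ) :
    ∑ t, ∑ t', ∑ i, ∑ j, f t t' i j = ∑ i, ∑ j, ∑ t, ∑ t', f t t' i j := by
  calc ∑ t, ∑ t', ∑ i, ∑ j, f t t' i j
      = ∑ t, ∑ i, ∑ t', ∑ j, f t t' i j :=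
        Finset.sum_congr rfl fun t _ => Finset.sum_comm
    _ = ∑ i, ∑ t, ∑ t', ∑ j, f t t' i j := Finset.sum_comm
    _ = ∑ i, ∑ t, ∑ j, ∑ t', f t t' i j :=
        Finset.sum_congr rfl fun i _ => Finset.sum_congr rfl fun t _ => Finset.sum_comm
    _ = ∑ i, ∑ j, ∑ t, ∑ t', f t t' i j :=
        Finset.sum_congr rfl fun i _ => Finset.sum_comm

private lemma quad_key {V : Type*} [Fintype V] (B : Matrix V V ℝ) (hB : B.PosSemidef)
    {k : ℕ} (x : Fin k → V → ℝ) :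
    ∑ t, ∑ t', ∑ i, ∑ j, x t i * B i j * x t' j
      ≤ (k : ℝ) * ∑ t, ∑ i, ∑ j, x t i * B i j * x t j := by
  set Q : (V → ℝ) → (V → ℝ) → ℝ := fun u v => ∑ i, ∑ j, u i * B i j * v j with hQ
  have hpos : ∀ u, 0 ≤ Q u u := by
    intro u
    have h := hB.dotProduct_mulVec_nonneg u
    simp only [star_trivial, dotProduct, Matrix.mulVec, Finset.mul_sum] at h
    simpa [hQ, mul_assoc] using h
  have hexp : ∀ u v : V → ℝ,
      Q (fun i => u i - v i) (fun i => u i - v i) = Q u u - Q u v - Q v u + Q v v := by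
    intro u v
    have h : ∀ i j, (u i - v i) * B i j * (u j - v j) =
        u i * B i j * u j - u i * B i j * v j - (v i * B i j * u j - v i * B i j * v j) := by
      intro i j; ring
    simp only [hQ]
    simp_rw [h, Finset.sum_sub_distrib]
    ring
  have h0 : 0 ≤ ∑ t, ∑ t', Q (fun i => x t i - x t' i) (fun i => x t i - x t' i) :=
    Finset.sum_nonneg fun t _ => Finset.sum_nonneg fun t' _ => hpos _
  have hswap : ∑ t, ∑ t', Q (x t') (x t) = ∑ t, ∑ t', Q (x t) (x t') := Finset.sum_comm
  have h1 : ∑ t, ∑ t', Q (fun i => x t i - x t' i) (fun i => x t i - x t' i)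
      = (k : ℝ) * (∑ t, Q (x t) (x t)) - ∑ t, ∑ t', Q (x t) (x t')
        - ∑ t, ∑ t', Q (x t') (x t) + (k : ℝ) * (∑ t, Q (x t) (x t)) := by
    simp_rw [hexp, Finset.sum_add_distrib, Finset.sum_sub_distrib, Finset.sum_const,
      Finset.card_univ, Fintype.card_fin, nsmul_eq_mul]
    rw [← Finset.mul_sum]
  have h2 : ∑ t, ∑ t', Q (x t) (x t') ≤ (k : ℝ) * ∑ t, Q (x t) (x t) := by
    rw [h1, hswap] at h0
    linarith
  exact h2

/-- Lovász's sandwich theorem, upper part: `ϑ(Γ) ≤ χ(Γ̄)`, the chromatic number of the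
complementary graph. -/
theorem lovaszTheta_le_chromaticNumber_compl {V : Type*} [Fintype V]
    (Γ : SimpleGraph V) :
    lovaszTheta Γ ≤ ((Γᶜ.chromaticNumber).toNat : ℝ) := by
  classical
  set k := (Γᶜ.chromaticNumber).toNat with hkdef
  obtain ⟨c⟩ := Γᶜ.colorable_chromaticNumber_of_fintype
  apply Real.sSup_le _ (by positivity)
  rintro s ⟨B, hPSD, htr, hE, rfl⟩
  -- indicator vectors of the color classes
  set x : Fin k → V → ℝ := fun t i => if c i = t then 1 else 0 with hx
  have hone : ∀ i, ∑ t, x t i = 1 := by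
    intro i
    simp [hx]
  -- entries with equal colors off the diagonal vanish
  have hzero : ∀ i j, i ≠ j → c i = c j → B i j = 0 := by
    intro i j hij hcij
    apply hE
    by_contra hadj
    exact c.valid ⟨hij, hadj⟩ hcij
  -- the "trace" term
  have htrace : ∑ t, ∑ i, ∑ j, x t i * B i j * x t j = 1 := by
    have : ∀ t, ∑ i, ∑ j, x t i * B i j * x t j
        = ∑ i, (if c i = t then B i i else 0) := by
      intro t
      refine Finset.sum_congr rfl fun i _ => ?_
      rw [Finset.sum_eq_single i]
      · by_cases h : c i = t <;> simp [hx, h]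
      · intro j _ hji
        by_cases h1 : c i = t
        · by_cases h2 : c j = t
          · rw [hzero i j (Ne.symm hji) (h1.trans h2.symm)]; ring
          · simp [hx, h2]
        · simp [hx, h1]
      · intro h; exact absurd (Finset.mem_univ i) h
    simp_rw [this]
    rw [Finset.sum_comm]
    simp_rw [Finset.sum_ite_eq (Finset.univ : Finset (Fin k))]
    simpa using htr
  -- the total sum equals the full quadratic form over the sum of indicators
  have hsum : ∑ i, ∑ j, B i j = ∑ t, ∑ t', ∑ i, ∑ j, x t i * B i j * x t' j := by
    rw [sum_swap4]
    refine Finset.sum_congr rfl fun i _ => Finset.sum_congr rfl fun j _ => ?_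
    have : ∑ t, ∑ t', x t i * B i j * x t' j
        = (∑ t, x t i) * B i j * (∑ t', x t' j) := by
      rw [Finset.sum_mul, Finset.sum_mul]
      refine Finset.sum_congr rfl fun t _ => ?_
      rw [Finset.mul_sum]
    rw [this, hone i, hone j]
    ring
  have hkey := quad_key B hPSD x
  rw [htrace, mul_one] at hkey
  rw [hsum]
  exact hkey
end

section
/- For every subset C ⊆ H_n of the binary Hamming space and every 0 ≤ k ≤ n, the Krawtchouk polynomials satisfy the positivity property Σ_{(x,y) ∈ C²} K_k^n(d_H(x,y)) ≥ 0. -/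
open Finset

/-- The Krawtchouk polynomial `K_k^n(t) = ∑_{j=0}^k (−1)^j C(t,j) C(n−t,k−j)`,
evaluated at a natural number `t`. -/
def krawtchouk (n k t : ℕ) : ℝ :=
  ∑ j ∈ Finset.range (k + 1),
    (-1 : ℝ) ^ j * (Nat.choose t j : ℝ) * (Nat.choose (n - t) (k - j) : ℝ)

section aux

variable {α : Type*} [Fintype α] [DecidableEq α]

lemma kraw_card_filter (T : Finset α) (k j : ℕ) (hj : j ≤ k) :
    ((Finset.univ.powersetCard k).filter (fun S => (S ∩ T).card = j)).card
      = T.card.choose j * Tᶜ.card.choose (k - j) := by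
  rw [← Finset.card_powersetCard, ← Finset.card_powersetCard, ← Finset.card_product]
  refine Finset.card_bij' (fun S _ => (S ∩ T, S \ T)) (fun p _ => p.1 ∪ p.2) ?_ ?_ ?_ ?_
  · intro S hS
    simp only [Finset.mem_filter, Finset.mem_powersetCard] at hS
    obtain ⟨⟨-, hcard⟩, hj'⟩ := hS
    simp only [Finset.mem_product, Finset.mem_powersetCard]
    refine ⟨⟨Finset.inter_subset_right, hj'⟩, ?_, ?_⟩
    · intro i hi
      simp only [Finset.mem_sdiff] at hi
      simpa using hi.2
    · have := Finset.card_inter_add_card_sdiff S T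
      omega
  · intro p hp
    simp only [Finset.mem_product, Finset.mem_powersetCard] at hp
    obtain ⟨⟨hp1, hc1⟩, hp2, hc2⟩ := hp
    have hdisj : Disjoint p.1 p.2 := by
      refine Finset.disjoint_left.2 fun a ha ha2 => ?_
      have := hp2 ha2
      simp only [Finset.mem_compl] at this
      exact this (hp1 ha)
    have hAT : p.1 ∩ T = p.1 := Finset.inter_eq_left.2 hp1
    have hBT : p.2 ∩ T = ∅ := by
      refine Finset.eq_empty_of_forall_notMem fun a ha => ?_
      simp only [Finset.mem_inter] at ha
      have := hp2 ha.1
      simp only [Finset.mem_compl] at this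
      exact this ha.2
    simp only [Finset.mem_filter, Finset.mem_powersetCard]
    refine ⟨⟨Finset.subset_univ _, ?_⟩, ?_⟩
    · rw [Finset.card_union_of_disjoint hdisj, hc1, hc2]; omega
    · rw [Finset.union_inter_distrib_right, hAT, hBT, Finset.union_empty, hc1]
  · intro S hS
    ext a
    simp only [Finset.mem_union, Finset.mem_inter, Finset.mem_sdiff]
    tauto
  · intro p hp
    simp only [Finset.mem_product, Finset.mem_powersetCard] at hp
    obtain ⟨⟨hp1, hc1⟩, hp2, hc2⟩ := hp
    have hAT : p.1 ∩ T = p.1 := Finset.inter_eq_left.2 hp1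
    have hBT : p.2 ∩ T = ∅ := by
      refine Finset.eq_empty_of_forall_notMem fun a ha => ?_
      simp only [Finset.mem_inter] at ha
      have := hp2 ha.1
      simp only [Finset.mem_compl] at this
      exact this ha.2
    have h1 : (p.1 ∪ p.2) ∩ T = p.1 := by
      rw [Finset.union_inter_distrib_right, hAT, hBT, Finset.union_empty]
    have h2 : (p.1 ∪ p.2) \ T = p.2 := by
      ext a
      simp only [Finset.mem_sdiff, Finset.mem_union]
      constructor
      · rintro ⟨h | h, hnT⟩
        · exact absurd (hp1 h) hnT
        · exact h
      · intro h
        have := hp2 h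
        simp only [Finset.mem_compl] at this
        exact ⟨Or.inr h, this⟩
    exact Prod.ext h1 h2

lemma kraw_sum_powersetCard (T : Finset α) (k : ℕ) :
    ∑ S ∈ Finset.univ.powersetCard k, (-1 : ℝ) ^ (S ∩ T).card
      = krawtchouk (Fintype.card α) k T.card := by
  have hmaps : ∀ S ∈ (Finset.univ : Finset α).powersetCard k,
      (S ∩ T).card ∈ Finset.range (k + 1) := by
    intro S hS
    simp only [Finset.mem_powersetCard] at hS
    have := Finset.card_le_card (Finset.inter_subset_left : S ∩ T ⊆ S)
    simp only [Finset.mem_range]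
    omega
  rw [← Finset.sum_fiberwise_of_maps_to hmaps]
  unfold krawtchouk
  refine Finset.sum_congr rfl fun j hj => ?_
  have hj' : j ≤ k := by simpa using Nat.lt_succ_iff.1 (Finset.mem_range.1 hj)
  have : ∀ S ∈ (Finset.univ.powersetCard k).filter (fun S => (S ∩ T).card = j),
      (-1 : ℝ) ^ (S ∩ T).card = (-1 : ℝ) ^ j := by
    intro S hS; rw [(Finset.mem_filter.1 hS).2]
  rw [Finset.sum_congr rfl this, Finset.sum_const, kraw_card_filter T k j hj',
    Finset.card_compl]
  -- cast arithmetic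
  ring

end aux

/-- The sign character. -/
def zsgn (a : ZMod 2) : ℝ := if a = 0 then 1 else -1

lemma zsgn_mul_zsgn (a b : ZMod 2) : zsgn a * zsgn b = if a = b then 1 else -1 := by
  fin_cases a <;> fin_cases b <;> simp [zsgn] <;> split_ifs <;> simp_all <;> norm_num <;> contradiction

lemma kraw_prod_zsgn {n : ℕ} (S : Finset (Fin n)) (x y : Fin n → ZMod 2) :
    (∏ i ∈ S, zsgn (x i)) * (∏ i ∈ S, zsgn (y i))
      = (-1 : ℝ) ^ (S ∩ ({i | x i ≠ y i} : Finset (Fin n))).card := by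
  rw [← Finset.prod_mul_distrib]
  have h1 : ∀ i ∈ S, zsgn (x i) * zsgn (y i) = if x i = y i then 1 else (-1 : ℝ) :=
    fun i _ => zsgn_mul_zsgn _ _
  have h2 : S ∩ ({i | x i ≠ y i} : Finset (Fin n)) = S.filter (fun i => ¬ x i = y i) := by
    ext a; simp
  rw [Finset.prod_congr rfl h1, Finset.prod_ite, Finset.prod_const, Finset.prod_const, h2]
  simp

/-- Positivity property of the Krawtchouk polynomials: for every code `C ⊆ H_n` and
every `0 ≤ k ≤ n`, `∑_{(x,y) ∈ C²} K_k^n(d_H(x,y)) ≥ 0`. -/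
theorem krawtchouk_positivity (n k : ℕ) (hk : k ≤ n) (C : Finset (Fin n → ZMod 2)) :
    0 ≤ ∑ x ∈ C, ∑ y ∈ C, krawtchouk n k (hammingDist x y) := by
  have key : ∀ x y : Fin n → ZMod 2, krawtchouk n k (hammingDist x y)
      = ∑ S ∈ Finset.univ.powersetCard k,
          (∏ i ∈ S, zsgn (x i)) * (∏ i ∈ S, zsgn (y i)) := by
    intro x y
    have h1 : hammingDist x y = ({i | x i ≠ y i} : Finset (Fin n)).card := rfl
    have h2 := kraw_sum_powersetCard ({i | x i ≠ y i} : Finset (Fin n)) k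
    rw [Fintype.card_fin] at h2
    rw [h1, ← h2]
    exact Finset.sum_congr rfl fun S _ => (kraw_prod_zsgn S x y).symm
  calc (0 : ℝ) ≤ ∑ S ∈ Finset.univ.powersetCard k, (∑ x ∈ C, ∏ i ∈ S, zsgn (x i)) ^ 2 :=
        Finset.sum_nonneg fun S _ => sq_nonneg _
    _ = ∑ x ∈ C, ∑ y ∈ C, krawtchouk n k (hammingDist x y) := by
        simp_rw [key, sq, Finset.sum_mul, Finset.mul_sum]
        rw [Finset.sum_comm]
        refine Finset.sum_congr rfl fun x _ => ?_
        rw [Finset.sum_comm]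
end

section
/- For every 0 ≤ k ≤ n, the real matrix indexed by H_n × H_n with entries (x,y) ↦ K_k^n(d_H(x,y)) is symmetric positive semidefinite. -/
open Finset

variable {n k : ℕ}

lemma fiber_card (D : Finset (Fin n)) (j : ℕ) (hj : j ≤ k) :
    (((univ : Finset (Fin n)).powersetCard k).filter (fun S => (S ∩ D).card = j)).card
      = D.card.choose j * (Dᶜ.card).choose (k - j) := by
  rw [← Finset.card_powersetCard, ← Finset.card_powersetCard, ← Finset.card_product]
  apply Finset.card_bij' (fun S _ => (S ∩ D, S \ D))
    (fun P _ => P.1 ∪ P.2)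
  · intro S hS
    simp only [mem_filter, mem_powersetCard] at hS
    obtain ⟨⟨-, hcard⟩, hj⟩ := hS
    simp only [mem_product, mem_powersetCard]
    refine ⟨⟨inter_subset_right, hj⟩, ?_, ?_⟩
    · intro i hi
      simp only [mem_sdiff] at hi
      simp [hi.2]
    · have := Finset.card_inter_add_card_sdiff S D
      omega
  · intro P hP
    simp only [mem_product, mem_powersetCard] at hP
    obtain ⟨⟨hA, hAc⟩, hB, hBc⟩ := hP
    have hdisj : Disjoint P.1 P.2 := by
      refine Finset.disjoint_left.2 fun a ha hb => ?_
      have := hB hb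
      simp only [mem_compl] at this
      exact this (hA ha)
    simp only [mem_filter, mem_powersetCard]
    refine ⟨⟨subset_univ _, ?_⟩, ?_⟩
    · rw [card_union_of_disjoint hdisj, hAc, hBc]; omega
    · have : (P.1 ∪ P.2) ∩ D = P.1 := by
        rw [union_inter_distrib_right, (inter_eq_left).2 hA]
        have : P.2 ∩ D = ∅ := by
          refine eq_empty_of_forall_notMem fun a ha => ?_
          simp only [mem_inter] at ha
          have := hB ha.1
          simp only [mem_compl] at this
          exact this ha.2
        rw [this, union_empty]
      rw [this, hAc]
  · intro S hS
    exact (union_comm _ _).trans (Finset.sdiff_union_inter S D)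
  · intro P hP
    simp only [mem_product, mem_powersetCard] at hP
    obtain ⟨⟨hA, hAc⟩, hB, hBc⟩ := hP
    have h2 : P.2 ∩ D = ∅ := by
      refine eq_empty_of_forall_notMem fun a ha => ?_
      simp only [mem_inter] at ha
      have := hB ha.1
      simp only [mem_compl] at this
      exact this ha.2
    have h1 : (P.1 ∪ P.2) ∩ D = P.1 := by
      rw [union_inter_distrib_right, (inter_eq_left).2 hA, h2, union_empty]
    have h3 : (P.1 ∪ P.2) \ D = P.2 := by
      rw [union_sdiff_distrib, sdiff_eq_empty_iff_subset.2 hA, empty_union,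
        Finset.sdiff_eq_self_iff_disjoint.2 ?_]
      rw [disjoint_iff_inter_eq_empty, inter_comm] at *; exact h2
    exact Prod.ext h1 h3

lemma key_sum (hk : k ≤ n) (D : Finset (Fin n)) :
    ∑ S ∈ (univ : Finset (Fin n)).powersetCard k, (-1 : ℝ) ^ (S ∩ D).card
      = krawtchouk n k D.card := by
  have hmaps : ∀ S ∈ (univ : Finset (Fin n)).powersetCard k,
      (S ∩ D).card ∈ Finset.range (k + 1) := by
    intro S hS
    simp only [mem_powersetCard] at hS
    rw [mem_range, Nat.lt_succ_iff, ← hS.2]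
    exact card_le_card inter_subset_left
  rw [← Finset.sum_fiberwise_of_maps_to hmaps, krawtchouk]
  refine Finset.sum_congr rfl fun j hj => ?_
  have : ∀ S ∈ ((univ : Finset (Fin n)).powersetCard k).filter
      (fun S => (S ∩ D).card = j), (-1 : ℝ) ^ (S ∩ D).card = (-1 : ℝ) ^ j := by
    intro S hS
    rw [(mem_filter.1 hS).2]
  rw [Finset.sum_congr rfl this, Finset.sum_const, fiber_card D j (Nat.lt_succ_iff.1 (mem_range.1 hj)), nsmul_eq_mul]
  have hDc : Dᶜ.card = n - D.card := by
    rw [card_compl, Fintype.card_fin]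
  rw [hDc]
  push_cast
  ring

/-- The character `χ_S(x) = ∏_{i∈S} (-1)^{x_i}`, extended by 0 off the size-`k` slice. -/
noncomputable def chi (n k : ℕ) : Matrix (Finset (Fin n)) (Fin n → ZMod 2) ℝ :=
  fun S x => if S.card = k then ∏ i ∈ S, (-1 : ℝ) ^ (x i).val else 0

lemma chi_mul (x y : Fin n → ZMod 2) (S : Finset (Fin n)) :
    (∏ i ∈ S, (-1 : ℝ) ^ (x i).val) * (∏ i ∈ S, (-1 : ℝ) ^ (y i).val)
      = (-1 : ℝ) ^ (S ∩ ({i | x i ≠ y i} : Finset (Fin n))).card := by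
  rw [← Finset.prod_mul_distrib]
  have h1 : ∀ i ∈ S, (-1 : ℝ) ^ (x i).val * (-1 : ℝ) ^ (y i).val
      = if x i ≠ y i then (-1 : ℝ) else 1 := by
    intro i _
    have : ∀ a b : ZMod 2, (-1 : ℝ) ^ a.val * (-1 : ℝ) ^ b.val
        = if a ≠ b then (-1 : ℝ) else 1 := by
      intro a b
      fin_cases a <;> fin_cases b <;> simp [ZMod.val] <;> norm_num <;> simp [ZMod]
    exact this (x i) (y i)
  rw [Finset.prod_congr rfl h1,
    ← Finset.prod_filter_mul_prod_filter_not S (fun i => x i ≠ y i),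
    Finset.prod_congr rfl (fun i hi => if_pos (mem_filter.1 hi).2),
    Finset.prod_congr rfl (fun i hi => if_neg (mem_filter.1 hi).2),
    Finset.prod_const, Finset.prod_const_one, mul_one]
  have hset : S.filter (fun i => x i ≠ y i) = S ∩ ({i | x i ≠ y i} : Finset (Fin n)) := by
    ext i; simp [mem_filter, and_comm]
  rw [hset]

/-- For every `0 ≤ k ≤ n`, the matrix is PSD. -/
theorem krawtchouk_matrix_posSemidef (n k : ℕ) (hk : k ≤ n) :
    (Matrix.of (fun x y : Fin n → ZMod 2 =>
      krawtchouk n k (hammingDist x y))).PosSemidef := by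
  have heq : (Matrix.of (fun x y : Fin n → ZMod 2 =>
      krawtchouk n k (hammingDist x y))) = (Matrix.conjTranspose (chi n k)) * (chi n k) := by
    ext x y
    simp only [Matrix.mul_apply, Matrix.conjTranspose_apply, Matrix.of_apply, star_trivial]
    set D : Finset (Fin n) := ({i | x i ≠ y i} : Finset (Fin n)) with hD
    have hdist : hammingDist x y = D.card := rfl
    have hterm : ∀ S ∈ (univ : Finset (Finset (Fin n))),
        chi n k S x * chi n k S y
          = if S.card = k then (-1 : ℝ) ^ (S ∩ D).card else 0 := by
      intro S _
      simp only [chi]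
      split_ifs with h
      · exact chi_mul x y S
      · ring
    rw [Finset.sum_congr rfl hterm, ← Finset.sum_filter]
    have hfil : (univ : Finset (Finset (Fin n))).filter (fun S => S.card = k)
        = (univ : Finset (Fin n)).powersetCard k := by
      ext S; simp [mem_powersetCard]
    rw [hfil, key_sum hk D, hdist]
  rw [heq]
  exact Matrix.posSemidef_conjTranspose_mul_self _
end

section
/- Let k ≥ 2, let f : H_n^k → ℝ be symmetric under permutations of its arguments, let m ∈ ℝ, and let C ⊆ H_n be a nonempty code with f(x_1, …, x_k) ≥ m for every k-tuple of pairwise distinct elements of C. Define χ_C(z_1,…,z_k) = (1/|C|)·1_C(z_1)⋯1_C(z_k). Then χ_C satisfies: (1) χ_C(z_1,…,z_k) depends only on the set {z_1,…,z_k}; (2) for every fixed (z_3,…,z_k), the matrix (x,y) ↦ χ_C(x,y,z_3,…,z_k) is symmetric positive semidefinite with nonnegative entries; (3) χ_C(z_1,…,z_k) = 0 whenever z_1,…,z_k are pairwise distinct and f(z_1,…,z_k) ≤ m−1; (4) Σ_{x∈H_n} χ_C(x,…,x) = 1; and moreover Σ_{(x,y)∈H_n²} χ_C(x,y,y,…,y)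 = |C|. -/
open Finset

/-- The function `χ_C(z₁,…,z_k) = (1/|C|)·1_C(z₁)⋯1_C(z_k)` attached to a nonempty code
`C` satisfying `f ≥ m` on pairwise distinct `k`-tuples of `C` (here `k = k'+2 ≥ 2`)
satisfies conditions (1)–(4) of the semidefinite program of Theorem 5, and
`∑_{(x,y)∈H_n²} χ_C(x,y,y,…,y) = |C|`. -/
theorem chi_C_feasible {n k' : ℕ} (f : (Fin (k' + 2) → (Fin n → ZMod 2)) → ℝ)
    (hf : ∀ σ : Equiv.Perm (Fin (k' + 2)), ∀ z, f (z ∘ σ) = f z)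
    (m : ℝ) (C : Finset (Fin n → ZMod 2)) (hC : C.Nonempty)
    (hCf : ∀ z : Fin (k' + 2) → (Fin n → ZMod 2),
      (∀ i, z i ∈ C) → Function.Injective z → m ≤ f z)
    (χ : (Fin (k' + 2) → (Fin n → ZMod 2)) → ℝ)
    (hχ : ∀ z, χ z = (1 / (C.card : ℝ)) * ∏ i, (if z i ∈ C then (1 : ℝ) else 0)) :
    -- (1) `χ_C` depends only on the underlying set of its arguments
    (∀ z w : Fin (k' + 2) → (Fin n → ZMod 2), Set.range z = Set.range w → χ z = χ w) ∧
    -- (2) for every fixed `(z₃,…,z_k)`, the matrix `(x,y) ↦ χ_C(x,y,z₃,…,z_k)` is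
    -- symmetric positive semidefinite with nonnegative entries
    (∀ z : Fin k' → (Fin n → ZMod 2),
      (Matrix.of fun x y : Fin n → ZMod 2 =>
        χ (Fin.cons x (Fin.cons y z))).PosSemidef ∧
      (∀ x y : Fin n → ZMod 2, 0 ≤ χ (Fin.cons x (Fin.cons y z)))) ∧
    -- (3) `χ_C` vanishes on pairwise distinct `k`-tuples with `f ≤ m−1`
    (∀ z : Fin (k' + 2) → (Fin n → ZMod 2),
      Function.Injective z → f z ≤ m - 1 → χ z = 0) ∧
    -- (4) `∑_x χ_C(x,…,x) = 1`
    (∑ x : Fin n → ZMod 2, χ (fun _ => x)) = 1 ∧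
    -- objective value: `∑_{(x,y)} χ_C(x,y,y,…,y) = |C|`
    (∑ x : Fin n → ZMod 2, ∑ y : Fin n → ZMod 2, χ (Fin.cons x (fun _ => y)))
      = C.card := by

  have hcard : (0:ℝ) < (C.card : ℝ) := by
    exact_mod_cast Finset.card_pos.mpr hC
  set a : (Fin n → ZMod 2) → ℝ := fun t => if t ∈ C then (1:ℝ) else 0 with ha
  have ha0 : ∀ t, 0 ≤ a t := by intro t; simp only [ha]; positivity
  have hasum : ∑ t : Fin n → ZMod 2, a t = (C.card : ℝ) := by
    simp [ha, Finset.sum_boole]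
  have hkey : ∀ z, χ z = (1 / (C.card : ℝ)) * if (∀ i, z i ∈ C) then (1:ℝ) else 0 := by
    intro z
    rw [hχ]
    congr 1
    rw [Finset.prod_boole]
    simp
  refine ⟨?_, ?_, ?_, ?_, ?_⟩
  · intro z w h
    rw [hkey, hkey]
    have : (∀ i, z i ∈ C) ↔ (∀ i, w i ∈ C) := by
      constructor
      · intro hz i
        have : w i ∈ Set.range z := h ▸ Set.mem_range_self i
        obtain ⟨j, hj⟩ := this
        exact hj ▸ hz j
      · intro hw i
        have : z i ∈ Set.range w := h.symm ▸ Set.mem_range_self i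
        obtain ⟨j, hj⟩ := this
        exact hj ▸ hw j
    simp [this]
  · intro z
    set c : ℝ := (1 / (C.card : ℝ)) * ∏ i, a (z i) with hc
    have hc0 : 0 ≤ c := by
      apply mul_nonneg (by positivity)
      exact Finset.prod_nonneg fun i _ => ha0 _
    have hentry : ∀ x y, χ (Fin.cons x (Fin.cons y z)) = c * a x * a y := by
      intro x y
      rw [hχ, Fin.prod_univ_succ, Fin.prod_univ_succ]
      simp only [Fin.cons_zero, Fin.cons_succ, hc, ha]
      ring
    constructor
    · rw [Matrix.posSemidef_iff_dotProduct_mulVec]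
      constructor
      · ext i j
        simp only [Matrix.conjTranspose_apply, Matrix.of_apply, RCLike.star_def, starRingEnd_apply,
          star_trivial, hentry]
        ring
      · intro v
        have heq : dotProduct (star v) ((Matrix.of fun x y : Fin n → ZMod 2 =>
            χ (Fin.cons x (Fin.cons y z))).mulVec v) = c * (∑ t, v t * a t) ^ 2 := by
          simp only [dotProduct, Matrix.mulVec, Matrix.of_apply, hentry,
            Pi.star_apply, star_trivial]
          rw [sq, Finset.sum_mul_sum, Finset.mul_sum]
          refine Finset.sum_congr rfl fun x _ => ?_
          rw [Finset.mul_sum, Finset.mul_sum]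
          refine Finset.sum_congr rfl fun y _ => ?_
          ring
        rw [heq]
        positivity
    · intro x y
      rw [hentry]
      exact mul_nonneg (mul_nonneg hc0 (ha0 x)) (ha0 y)
  · intro z hz hfz
    rw [hkey, if_neg, mul_zero]
    intro h
    have := hCf z h hz
    linarith
  · have : ∀ x : Fin n → ZMod 2, χ (fun _ => x) = (1 / (C.card : ℝ)) * a x := by
      intro x
      rw [hkey]
      simp [ha]
    simp only [this]
    rw [← Finset.mul_sum, hasum]
    field_simp
  · have : ∀ x y : Fin n → ZMod 2,
        χ (Fin.cons x (fun _ => y)) = (1 / (C.card : ℝ)) * (a x * a y) := by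
      intro x y
      rw [hkey]
      have : (∀ i, (Fin.cons x (fun _ => y) : Fin (k' + 2) → (Fin n → ZMod 2)) i ∈ C) ↔
          (x ∈ C ∧ y ∈ C) := by
        constructor
        · intro h
          exact ⟨by simpa using h 0, by simpa [Fin.cons_succ] using h 1⟩
        · rintro ⟨hx, hy⟩ i
          rcases Fin.eq_zero_or_eq_succ i with rfl | ⟨j, rfl⟩
          · simpa using hx
          · simpa [Fin.cons_succ] using hy
      simp only [this]
      by_cases hx : x ∈ C <;> by_cases hy : y ∈ C <;> simp [ha, hx, hy]
    simp only [this]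
    have h2 : ∑ x : Fin n → ZMod 2, ∑ y : Fin n → ZMod 2, (1 / (C.card : ℝ)) * (a x * a y)
        = (1 / (C.card : ℝ)) * ((∑ x : Fin n → ZMod 2, a x) * (∑ y : Fin n → ZMod 2, a y)) := by
      rw [Finset.sum_mul_sum, Finset.mul_sum]
      exact Finset.sum_congr rfl fun x _ => by rw [Finset.mul_sum]
    rw [h2, hasum]
    field_simp
end

section
/- Let 𝒞(H_n) = {f : H_n → ℂ} with Aut(H_n) acting by (g·f)(x) = f(g⁻¹(x)), where Aut(H_n) is generated by translations x ↦ x+z and coordinate permutations. For 0 ≤ k ≤ n let P_k be the ℂ-linear span of the characters χ_z(x) = (−1)^{x·z} with wt(z) = k. Then 𝒞(H_n) = P_0 ⊕ P_1 ⊕ ⋯ ⊕ P_n, each P_k is invariant under the action of Aut(H_n), and each P_k is irreducible: it contains no Aut(H_n)-invariant subspace other than 0 and P_k itself. -/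
open Finset

/-- The character `χ_z(x) = (−1)^{x·z}` of `(𝔽₂ⁿ, +)`, as a complex-valued function. -/
def hammingChar {n : ℕ} (z : Fin n → ZMod 2) : (Fin n → ZMod 2) → ℂ :=
  fun x => (-1 : ℂ) ^ (∑ j, x j * z j).val


lemma neg_one_pow_val_add (a b : ZMod 2) :
    ((-1:ℂ)) ^ (a+b).val = (-1:ℂ)^a.val * (-1:ℂ)^b.val := by
  have h : ∀ c : ZMod 2, c = 0 ∨ c = 1 := by decide
  rcases h a with rfl | rfl <;> rcases h b with rfl | rfl <;>
    norm_num [show ((2:ZMod 2)).val = 0 from rfl, show ((1:ZMod 2)).val = 1 from rfl,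
      show ((0:ZMod 2)).val = 0 from rfl]

lemma hammingChar_add {n : ℕ} (z x y : Fin n → ZMod 2) :
    hammingChar z (x + y) = hammingChar z x * hammingChar z y := by
  unfold hammingChar
  rw [← neg_one_pow_val_add]
  congr 2
  rw [← Finset.sum_add_distrib]
  exact Finset.sum_congr rfl fun j _ => by simp [add_mul]

lemma hammingChar_mul {n : ℕ} (z w x : Fin n → ZMod 2) :
    hammingChar z x * hammingChar w x = hammingChar (z + w) x := by
  unfold hammingChar
  rw [← neg_one_pow_val_add]
  congr 2
  rw [← Finset.sum_add_distrib]
  exact Finset.sum_congr rfl fun j _ => by simp [mul_add]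

lemma hammingChar_zero {n : ℕ} (x : Fin n → ZMod 2) : hammingChar 0 x = 1 := by
  simp [hammingChar]

lemma sum_hammingChar {n : ℕ} (u : Fin n → ZMod 2) :
    ∑ x : Fin n → ZMod 2, hammingChar u x = if u = 0 then ((2:ℂ)^n) else 0 := by
  split_ifs with h
  · subst h
    simp [hammingChar_zero, Fintype.card_pi]
  · obtain ⟨j, hj⟩ : ∃ j, u j ≠ 0 := by
      by_contra hc
      push_neg at hc
      exact h (funext hc)
    set e : Fin n → ZMod 2 := Pi.single j 1 with he
    have hce : hammingChar u e = -1 := by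
      unfold hammingChar
      have hs : (∑ i, e i * u i) = u j := by
        rw [Finset.sum_eq_single j]
        · simp [he]
        · intro i _ hi; simp [he, Pi.single_apply, hi]
        · intro hju; exact absurd (Finset.mem_univ j) hju
      rw [hs]
      have : u j = 1 := by
        have := hj; revert this; revert hj
        have h1 : ∀ c : ZMod 2, c ≠ 0 → c = 1 := by decide
        intro hj _; exact h1 _ hj
      rw [this, show ((1:ZMod 2)).val = 1 from rfl]; norm_num
    have hS : ∑ x : Fin n → ZMod 2, hammingChar u x
        = ∑ x : Fin n → ZMod 2, hammingChar u (x + e) := by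
      exact (Fintype.sum_equiv (Equiv.addRight e) _ _ (fun x => rfl)).symm
    have hneg : ∑ x : Fin n → ZMod 2, hammingChar u x
        = -∑ x : Fin n → ZMod 2, hammingChar u x := by
      nth_rewrite 1 [hS]
      simp [hammingChar_add, hce]
    have h2 : (2:ℂ) * ∑ x : Fin n → ZMod 2, hammingChar u x = 0 := by
      linear_combination hneg
    have := (mul_eq_zero.mp h2).resolve_left (by norm_num)
    exact this

lemma add_eq_zero_iff_eq {n : ℕ} (z w : Fin n → ZMod 2) : z + w = 0 ↔ z = w := by
  constructor
  · intro h
    funext i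
    have := congrFun h i
    have h2 : ∀ a b : ZMod 2, a + b = 0 → a = b := by decide
    exact h2 _ _ this
  · rintro rfl
    funext i
    have h2 : ∀ a : ZMod 2, a + a = 0 := by decide
    exact h2 _

lemma sum_char_mul {n : ℕ} (z w : Fin n → ZMod 2) :
    ∑ x : Fin n → ZMod 2, hammingChar z x * hammingChar w x
      = if z = w then ((2:ℂ)^n) else 0 := by
  simp_rw [hammingChar_mul]
  rw [sum_hammingChar]
  congr 1
  simp [add_eq_zero_iff_eq]

lemma char_li (n : ℕ) : LinearIndependent ℂ (hammingChar (n := n)) := by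
  rw [Fintype.linearIndependent_iff]
  intro g hg w
  have h := congrArg (fun f : (Fin n → ZMod 2) → ℂ => ∑ x, f x * hammingChar w x) hg
  simp only [Finset.sum_apply, Pi.smul_apply, smul_eq_mul, Pi.zero_apply, zero_mul,
    Finset.sum_const_zero] at h
  simp_rw [Finset.sum_mul, mul_assoc] at h
  rw [Finset.sum_comm] at h
  simp_rw [← Finset.mul_sum, sum_char_mul] at h
  simp only [mul_ite, mul_zero, Finset.sum_ite_eq', Finset.mem_univ, if_true] at h
  have h2 : (2:ℂ)^n ≠ 0 := pow_ne_zero n two_ne_zero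
  exact (mul_eq_zero.mp h).resolve_right h2

noncomputable def chiBasis (n : ℕ) : Module.Basis (Fin n → ZMod 2) ℂ ((Fin n → ZMod 2) → ℂ) :=
  basisOfLinearIndependentOfCardEqFinrank (char_li n)
    (by simp [Module.finrank_fintype_fun_eq_card])

lemma chiBasis_coe (n : ℕ) : ⇑(chiBasis n) = hammingChar := by
  exact coe_basisOfLinearIndependentOfCardEqFinrank _ _

/-- `P_k`: the `ℂ`-span of the characters `χ_z` with `wt(z) = k`, inside the space
`𝒞(H_n)` of complex-valued functions on the Hamming space. -/
noncomputable def charSpan (n k : ℕ) : Submodule ℂ ((Fin n → ZMod 2) → ℂ) :=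
  Submodule.span ℂ {f | ∃ z : Fin n → ZMod 2, hammingNorm z = k ∧ f = hammingChar z}


lemma charSpan_eq (n k : ℕ) :
    charSpan n k = Submodule.span ℂ (hammingChar '' {z : Fin n → ZMod 2 | hammingNorm z = k}) := by
  unfold charSpan
  congr 1
  ext f
  constructor
  · rintro ⟨z, hz, rfl⟩; exact ⟨z, hz, rfl⟩
  · rintro ⟨z, hz, rfl⟩; exact ⟨z, hz, rfl⟩

lemma mem_charSpan_iff {n k : ℕ} (f : (Fin n → ZMod 2) → ℂ) :
    f ∈ charSpan n k ↔ ↑((chiBasis n).repr f).support ⊆ {z : Fin n → ZMod 2 | hammingNorm z = k} := by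
  rw [charSpan_eq, ← chiBasis_coe, ← Module.Basis.mem_span_image]

lemma hammingChar_mem {n : ℕ} (z : Fin n → ZMod 2) : hammingChar z ∈ charSpan n (hammingNorm z) :=
  Submodule.subset_span ⟨z, rfl, rfl⟩

-- translation of a character
lemma char_translate {n : ℕ} (z t : Fin n → ZMod 2) :
    (fun x => hammingChar z (x + t)) = hammingChar z t • hammingChar z := by
  funext x
  simp [hammingChar_add, mul_comm]

-- permutation of a character
lemma char_perm {n : ℕ} (z : Fin n → ZMod 2) (π : Equiv.Perm (Fin n)) :
    (fun x => hammingChar z (x ∘ π)) = hammingChar (z ∘ ⇑π⁻¹) := by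
  funext x
  unfold hammingChar
  congr 2
  rw [← Equiv.sum_comp π (fun i => x i * (z ∘ ⇑π⁻¹) i)]
  exact Finset.sum_congr rfl fun j _ => by simp

lemma hammingNorm_comp_perm {n : ℕ} (z : Fin n → ZMod 2) (π : Equiv.Perm (Fin n)) :
    hammingNorm (z ∘ ⇑π) = hammingNorm z := by
  unfold hammingNorm
  apply Finset.card_bij (fun i _ => π i)
  · intro i hi; simp only [Finset.mem_filter, Finset.mem_univ, true_and] at *; exact hi
  · intro a _ b _ h; exact π.injective h
  · intro b hb
    refine ⟨π.symm b, ?_, by simp⟩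
    simp only [Finset.mem_filter, Finset.mem_univ, true_and, Function.comp_apply] at *
    simpa using hb

lemma translate_mem_charSpan {n k : ℕ} (t : Fin n → ZMod 2) (f : (Fin n → ZMod 2) → ℂ)
    (hf : f ∈ charSpan n k) : (fun x => f (x + t)) ∈ charSpan n k := by
  have : (fun x => f (x + t)) = LinearMap.funLeft ℂ ℂ (fun x => x + t) f := rfl
  rw [this]
  have hmap : Submodule.map (LinearMap.funLeft ℂ ℂ (fun x : Fin n → ZMod 2 => x + t))
      (charSpan n k) ≤ charSpan n k := by
    rw [charSpan_eq, Submodule.map_span, Submodule.span_le]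
    rintro g ⟨g', ⟨z, hz, rfl⟩, rfl⟩
    have : LinearMap.funLeft ℂ ℂ (fun x : Fin n → ZMod 2 => x + t) (hammingChar z)
        = hammingChar z t • hammingChar z := by
      rw [← char_translate]; rfl
    rw [this]
    exact Submodule.smul_mem _ _ (Submodule.subset_span ⟨z, hz, rfl⟩)
  exact hmap ⟨f, hf, rfl⟩

lemma perm_mem_charSpan {n k : ℕ} (π : Equiv.Perm (Fin n)) (f : (Fin n → ZMod 2) → ℂ)
    (hf : f ∈ charSpan n k) : (fun x => f (x ∘ π)) ∈ charSpan n k := by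
  have : (fun x => f (x ∘ π)) = LinearMap.funLeft ℂ ℂ (fun x : Fin n → ZMod 2 => x ∘ π) f := rfl
  rw [this]
  have hmap : Submodule.map (LinearMap.funLeft ℂ ℂ (fun x : Fin n → ZMod 2 => x ∘ π))
      (charSpan n k) ≤ charSpan n k := by
    rw [charSpan_eq, Submodule.map_span, Submodule.span_le]
    rintro g ⟨g', ⟨z, hz, rfl⟩, rfl⟩
    have : LinearMap.funLeft ℂ ℂ (fun x : Fin n → ZMod 2 => x ∘ π) (hammingChar z)
        = hammingChar (z ∘ ⇑π⁻¹) := by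
      rw [← char_perm]; rfl
    rw [this]
    apply Submodule.subset_span
    exact ⟨z ∘ ⇑π⁻¹, by show hammingNorm _ = k; rw [hammingNorm_comp_perm]; exact hz, rfl⟩
  exact hmap ⟨f, hf, rfl⟩

lemma exists_perm_comp {n : ℕ} (z w : Fin n → ZMod 2) (h : hammingNorm z = hammingNorm w) :
    ∃ σ : Equiv.Perm (Fin n), w = z ∘ ⇑σ := by
  classical
  have hcard : Fintype.card {i // w i ≠ 0} = Fintype.card {i // z i ≠ 0} := by
    rw [Fintype.card_subtype, Fintype.card_subtype]
    exact h.symm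
  have hcard' : Fintype.card {i // ¬ w i ≠ 0} = Fintype.card {i // ¬ z i ≠ 0} := by
    rw [Fintype.card_subtype_compl (fun i => w i ≠ 0),
      Fintype.card_subtype_compl (fun i => z i ≠ 0), hcard]
  let e1 : {i // w i ≠ 0} ≃ {i // z i ≠ 0} := Fintype.equivOfCardEq hcard
  let e2 : {i // ¬ w i ≠ 0} ≃ {i // ¬ z i ≠ 0} := Fintype.equivOfCardEq hcard'
  refine ⟨(Equiv.sumCompl fun i => w i ≠ 0).symm.trans
    ((e1.sumCongr e2).trans (Equiv.sumCompl fun i => z i ≠ 0)), ?_⟩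
  funext i
  by_cases hi : w i ≠ 0
  · have hs : (Equiv.sumCompl fun i => w i ≠ 0).symm i = Sum.inl ⟨i, hi⟩ :=
      Equiv.sumCompl_symm_apply_of_pos (p := fun i => w i ≠ 0) hi
    simp only [Function.comp_apply, Equiv.trans_apply, hs, Equiv.sumCongr_apply, Sum.map_inl,
      Equiv.sumCompl_apply_inl]
    have hz : z ((e1 ⟨i, hi⟩ : {i // z i ≠ 0}) : Fin n) ≠ 0 := (e1 ⟨i, hi⟩).2
    have h1 : ∀ a b : ZMod 2, a ≠ 0 → b ≠ 0 → a = b := by decide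
    exact h1 _ _ hi hz
  · have hs : (Equiv.sumCompl fun i => w i ≠ 0).symm i = Sum.inr ⟨i, hi⟩ :=
      Equiv.sumCompl_symm_apply_of_neg (p := fun i => w i ≠ 0) hi
    simp only [Function.comp_apply, Equiv.trans_apply, hs, Equiv.sumCongr_apply, Sum.map_inr,
      Equiv.sumCompl_apply_inr]
    have hz : ¬ z ((e2 ⟨i, hi⟩ : {i // ¬ z i ≠ 0}) : Fin n) ≠ 0 := (e2 ⟨i, hi⟩).2
    push_neg at hi hz
    rw [hi, hz]

lemma avg_eq {n : ℕ} (f : (Fin n → ZMod 2) → ℂ) (w : Fin n → ZMod 2) :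
    (fun x => ∑ t : Fin n → ZMod 2, hammingChar w t * f (x + t))
      = (((2:ℂ)^n) * (chiBasis n).repr f w) • hammingChar w := by
  have hf : ∀ y, f y = ∑ z : Fin n → ZMod 2, (chiBasis n).repr f z * hammingChar z y := by
    intro y
    conv_lhs => rw [← (chiBasis n).sum_repr f]
    simp [Finset.sum_apply, chiBasis_coe]
  funext x
  calc ∑ t : Fin n → ZMod 2, hammingChar w t * f (x + t)
      = ∑ t : Fin n → ZMod 2, ∑ z : Fin n → ZMod 2,
          (chiBasis n).repr f z * hammingChar z x * (hammingChar z t * hammingChar w t) := by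
        refine Finset.sum_congr rfl fun t _ => ?_
        rw [hf (x + t), Finset.mul_sum]
        refine Finset.sum_congr rfl fun z _ => ?_
        rw [hammingChar_add]; ring
    _ = ∑ z : Fin n → ZMod 2, (chiBasis n).repr f z * hammingChar z x
          * (∑ t : Fin n → ZMod 2, hammingChar z t * hammingChar w t) := by
        rw [Finset.sum_comm]
        exact Finset.sum_congr rfl fun z _ => by rw [Finset.mul_sum]
    _ = (((2:ℂ)^n) * (chiBasis n).repr f w) * hammingChar w x := by
        simp_rw [sum_char_mul]
        simp only [mul_ite, mul_zero, Finset.sum_ite_eq', Finset.mem_univ, if_true]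
        ring

/-- The decomposition `𝒞(H_n) = P_0 ⊕ ⋯ ⊕ P_n`: the subspaces `P_k` form an internal
direct sum decomposition of the space of complex-valued functions on `H_n`, each `P_k`
is invariant under the action of `Aut(H_n)` (generated by translations and coordinate
permutations, acting by `(g·f)(x) = f(g⁻¹ x)`), and each `P_k` is irreducible: it has
no invariant subspace other than `0` and `P_k` itself. -/
theorem charSpan_decomposition (n : ℕ) :
    -- `𝒞(H_n) = P_0 ⊕ P_1 ⊕ ⋯ ⊕ P_n`
    DirectSum.IsInternal (fun k : Fin (n + 1) => charSpan n k) ∧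
    -- each `P_k` is `Aut(H_n)`-invariant
    (∀ k : Fin (n + 1),
      (∀ z : Fin n → ZMod 2, ∀ f ∈ charSpan n k,
        (fun x => f (x + z)) ∈ charSpan n k) ∧
      (∀ π : Equiv.Perm (Fin n), ∀ f ∈ charSpan n k,
        (fun x => f (x ∘ π)) ∈ charSpan n k)) ∧
    -- each `P_k` is irreducible
    (∀ k : Fin (n + 1), ∀ W : Submodule ℂ ((Fin n → ZMod 2) → ℂ),
      W ≤ charSpan n k →
      (∀ z : Fin n → ZMod 2, ∀ f ∈ W, (fun x => f (x + z)) ∈ W) →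
      (∀ π : Equiv.Perm (Fin n), ∀ f ∈ W, (fun x => f (x ∘ π)) ∈ W) →
      W = ⊥ ∨ W = charSpan n k) := by
  refine ⟨?_, ?_, ?_⟩
  · -- direct sum
    apply DirectSum.isInternal_submodule_of_iSupIndep_of_iSup_eq_top
    · -- independence
      intro k
      rw [Submodule.disjoint_def]
      intro f hf1 hf2
      have hle : (⨆ j, ⨆ _ : j ≠ k, charSpan n ↑j)
          ≤ Submodule.span ℂ (hammingChar '' {z : Fin n → ZMod 2 | hammingNorm z ≠ ↑k}) := by
        refine iSup_le fun j => iSup_le fun hj => ?_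
        rw [charSpan_eq]
        apply Submodule.span_mono
        rintro g ⟨z, hz, rfl⟩
        refine ⟨z, fun hc => hj (Fin.val_injective ?_), rfl⟩
        rw [← hz, hc]
      have h2 := hle hf2
      rw [← chiBasis_coe, Module.Basis.mem_span_image] at h2
      have h1 := (mem_charSpan_iff f).mp hf1
      have hrepr : (chiBasis n).repr f = 0 := by
        ext z
        by_contra hz
        have hmem : z ∈ ((chiBasis n).repr f).support := Finsupp.mem_support_iff.mpr hz
        exact (h2 hmem) (h1 hmem)
      exact (chiBasis n).repr.map_eq_zero_iff.mp hrepr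
    · -- supremum
      rw [eq_top_iff]
      have hspan : Submodule.span ℂ (Set.range (hammingChar (n := n))) = ⊤ := by
        rw [← chiBasis_coe]; exact (chiBasis n).span_eq
      rw [← hspan, Submodule.span_le]
      rintro g ⟨z, rfl⟩
      have hk : hammingNorm z ≤ n := by
        have := hammingNorm_le_card_fintype (x := z)
        simpa using this
      exact Submodule.mem_iSup_of_mem ⟨hammingNorm z, Nat.lt_succ_of_le hk⟩ (hammingChar_mem z)
  · -- invariance
    intro k
    exact ⟨fun z f hf => translate_mem_charSpan z f hf,
      fun π f hf => perm_mem_charSpan π f hf⟩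
  · -- irreducibility
    intro k W hWle hWtrans hWperm
    by_cases hW : W = ⊥
    · exact Or.inl hW
    right
    obtain ⟨f, hfW, hf0⟩ := (Submodule.ne_bot_iff W).mp hW
    set c := (chiBasis n).repr f with hcdef
    have hc : c ≠ 0 := fun h => hf0 ((chiBasis n).repr.map_eq_zero_iff.mp h)
    obtain ⟨w, hw⟩ : ∃ w, c w ≠ 0 := by
      by_contra h
      push_neg at h
      exact hc (Finsupp.ext fun a => by simp [h a])
    have hsupp := (mem_charSpan_iff f).mp (hWle hfW)
    have hwk : hammingNorm w = ↑k := hsupp (Finsupp.mem_support_iff.mpr hw)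
    have hgW : (fun x => ∑ t : Fin n → ZMod 2, hammingChar w t * f (x + t)) ∈ W := by
      have heq : (fun x : Fin n → ZMod 2 => ∑ t : Fin n → ZMod 2, hammingChar w t * f (x + t))
          = ∑ t : Fin n → ZMod 2, hammingChar w t • (fun x => f (x + t)) := by
        funext x
        simp [Finset.sum_apply]
      rw [heq]
      exact Submodule.sum_mem _ fun t _ => Submodule.smul_mem _ _ (hWtrans t f hfW)
    rw [avg_eq] at hgW
    have hne : ((2:ℂ)^n * c w) ≠ 0 := mul_ne_zero (pow_ne_zero _ two_ne_zero) hw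
    have hchiW : hammingChar w ∈ W := by
      have hsm := Submodule.smul_mem W ((2:ℂ)^n * c w)⁻¹ hgW
      rwa [smul_smul, inv_mul_cancel₀ hne, one_smul] at hsm
    apply le_antisymm hWle
    rw [charSpan_eq, Submodule.span_le]
    rintro g ⟨z, hz, rfl⟩
    obtain ⟨σ, hσ⟩ := exists_perm_comp w z (by rw [hwk, hz])
    have hperm := hWperm σ⁻¹ _ hchiW
    rwa [char_perm, inv_inv, ← hσ] at hperm
end
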